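/- Let A = K{x} be the free magma algebra over a field K of characteristic 0, D the derivation with D(x)=1, and L left multiplication by x. For f ∈ A homogeneous of degree n, the element g = Σ_{k=1}^{n+1} ((−1)^{k−1}/k!) L^k(D^{k−1} f) satisfies D(g) = f. -/

import Mathlib

noncomputable section

/-- The free unital magma algebra `K{x}` in one variable. -/
abbrev FreeMagmaAlgebra1 (K : Type*) [Field K] : Type _ :=
  MonoidAlgebra K (WithOne (FreeMagma Unit))

/-- The generator `x` of `K{x}`. -/
def genx (K : Type*) [Field K] : FreeMagmaAlgebra1 K :=
  MonoidAlgebra.of K (WithOne (FreeMagma Unit)) (FreeMagma.of ())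

/-- Degree of a monomial: the unit has degree 0, a magma monomial has its length. -/
def degW : WithOne (FreeMagma Unit) → ℕ :=
  WithOne.recOneCoe 0 fun t => t.length

/-- `f` is homogeneous of degree `n`. -/
def IsHomog {K : Type*} [Field K] (f : FreeMagmaAlgebra1 K) (n : ℕ) : Prop :=
  ∀ m ∈ f.coeff.support, degW m = n

lemma degW_one : degW (1 : WithOne (FreeMagma Unit)) = 0 := rfl

lemma degW_coe (t : FreeMagma Unit) : degW (t : WithOne (FreeMagma Unit)) = t.length := rfl

lemma degW_mul (a b : WithOne (FreeMagma Unit)) : degW (a * b) = degW a + degW b := by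
  induction a using WithOne.cases_on
  · simp [degW_one]
  · induction b using WithOne.cases_on
    · simp [degW_one]
    · intro b a; rw [← WithOne.coe_mul, degW_coe, degW_coe, degW_coe]
      rfl

section
variable {K : Type*} [Field K]

lemma homog_mul {f g : FreeMagmaAlgebra1 K} {a b : ℕ} (hf : IsHomog f a) (hg : IsHomog g b) :
    IsHomog (f * g) (a + b) := by
  classical
  intro m hm
  have := MonoidAlgebra.support_coeff_mul_subset f g hm
  obtain ⟨x, hx, y, hy, rfl⟩ := Finset.mem_mul.1 this
  rw [degW_mul, hf x hx, hg y hy]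

lemma homog_add {f g : FreeMagmaAlgebra1 K} {a : ℕ} (hf : IsHomog f a) (hg : IsHomog g a) :
    IsHomog (f + g) a := fun m hm => by
  classical
  rcases Finset.mem_union.1 (Finsupp.support_add (g₁ := f.coeff) (g₂ := g.coeff) hm) with h | h
  · exact hf m h
  · exact hg m h

lemma homog_smul {f : FreeMagmaAlgebra1 K} {a : ℕ} (c : K) (hf : IsHomog f a) :
    IsHomog (c • f) a := fun m hm => hf m (Finsupp.support_smul hm)

lemma homog_of (m : WithOne (FreeMagma Unit)) :
    IsHomog (MonoidAlgebra.of K _ m) (degW m) := by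
  intro x hx
  have : x = m := by
    simpa using Finsupp.support_single_subset hx
  rw [this]

end

lemma homog_sum {K : Type*} [Field K] {ι : Type*} (s : Finset ι) (g : ι → FreeMagmaAlgebra1 K)
    {a : ℕ} (h : ∀ i ∈ s, IsHomog (g i) a) : IsHomog (∑ i ∈ s, g i) a := by
  classical
  induction s using Finset.induction with
  | empty => intro m hm; simp at hm
  | insert _ _ hx ih =>
      rw [Finset.sum_insert hx]
      exact homog_add (h _ (Finset.mem_insert_self _ _))
        (ih fun i hi => h i (Finset.mem_insert_of_mem hi))

section
variable {K : Type*} [Field K] {D : FreeMagmaAlgebra1 K →ₗ[K] FreeMagmaAlgebra1 K}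
  (hD : ∀ f g : FreeMagmaAlgebra1 K, D (f * g) = D f * g + f * D g)

include hD

lemma D_one : D 1 = 0 := by
  have h : D 1 = D 1 + D 1 := by simpa using hD 1 1
  exact left_eq_add.mp h

variable (hDx : D (genx K) = 1)
include hDx

lemma homog_D_magma (t : FreeMagma Unit) :
    IsHomog (D (MonoidAlgebra.of K (WithOne (FreeMagma Unit)) (t : WithOne (FreeMagma Unit))))
      (t.length - 1) := by
  induction t with
  | ih1 u =>
      have : (MonoidAlgebra.of K (WithOne (FreeMagma Unit))
          ((FreeMagma.of u : FreeMagma Unit) : WithOne (FreeMagma Unit))) = genx K := by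
        cases u; rfl
      rw [this, hDx]
      have h1 : (1 : FreeMagmaAlgebra1 K) = MonoidAlgebra.of K (WithOne (FreeMagma Unit)) 1 :=
        (map_one _).symm
      rw [h1]
      exact homog_of 1
  | ih2 t1 t2 ih1 ih2 =>
      have hcoe : ((t1 * t2 : FreeMagma Unit) : WithOne (FreeMagma Unit))
          = (t1 : WithOne (FreeMagma Unit)) * (t2 : WithOne (FreeMagma Unit)) := rfl
      rw [hcoe, map_mul, hD]
      have h1 := homog_mul ih1 (homog_of (K := K) (t2 : WithOne (FreeMagma Unit)))
      have h2 := homog_mul (homog_of (K := K) (t1 : WithOne (FreeMagma Unit))) ih2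
      rw [degW_coe] at h1 h2
      have l1 := t1.length_pos
      have l2 := t2.length_pos
      have e1 : t1.length - 1 + t2.length = (t1 * t2).length - 1 := by
        simp only [FreeMagma.length]; omega
      have e2 : t1.length + (t2.length - 1) = (t1 * t2).length - 1 := by
        simp only [FreeMagma.length]; omega
      rw [e1] at h1
      rw [e2] at h2
      exact homog_add h1 h2

lemma homog_D {f : FreeMagmaAlgebra1 K} {n : ℕ} (hf : IsHomog f (n + 1)) :
    IsHomog (D f) n := by
  have hrep : f = ∑ m ∈ f.coeff.support, (f.coeff m) • MonoidAlgebra.of K (WithOne (FreeMagma Unit)) m := by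
    conv_lhs => rw [← MonoidAlgebra.sum_coeff_single f]
    rw [Finsupp.sum]
    refine Finset.sum_congr rfl fun m _ => ?_
    rw [MonoidAlgebra.of_apply, MonoidAlgebra.smul_single', mul_one]
  rw [hrep, map_sum]
  refine homog_sum _ _ fun m hm => ?_
  rw [map_smul]
  refine homog_smul _ ?_
  revert hm
  induction m using WithOne.cases_on
  · intro hm; exact absurd (hf 1 hm) (by simp [degW_one])
  · intro t
    intro hm
    have hlen : t.length = n + 1 := by rw [← degW_coe]; exact hf _ hm
    have := homog_D_magma hD hDx t
    rwa [hlen] at this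

omit hDx in
lemma D_homog_zero {f : FreeMagmaAlgebra1 K} (hf : IsHomog f 0) : D f = 0 := by
  have hsub : f.coeff.support ⊆ {1} := by
    intro m hm
    rw [Finset.mem_singleton]
    revert hm
    induction m using WithOne.cases_on
    · intro _; rfl
    · intro t
      intro hm
      have := hf _ hm
      rw [degW_coe] at this
      exact absurd this (Nat.pos_iff_ne_zero.mp t.length_pos)
  have : f = MonoidAlgebra.single 1 (f.coeff 1) :=
    MonoidAlgebra.coeff_injective (Finsupp.support_subset_singleton.mp hsub)
  rw [this]
  have : (MonoidAlgebra.single (1 : WithOne (FreeMagma Unit)) (f.coeff 1) : FreeMagmaAlgebra1 K)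
      = (f.coeff 1) • (1 : FreeMagmaAlgebra1 K) := by
    rw [MonoidAlgebra.one_def, MonoidAlgebra.smul_single', mul_one]
  rw [this, map_smul, D_one hD, smul_zero]

lemma D_pow_homog : ∀ (n : ℕ) (f : FreeMagmaAlgebra1 K), IsHomog f n →
    ((D : Module.End K (FreeMagmaAlgebra1 K)) ^ (n + 1)) f = 0 := by
  intro n
  induction n with
  | zero => intro f hf; rw [pow_one]; exact D_homog_zero hD hf
  | succ n ih =>
      intro f hf
      have : ((D : Module.End K (FreeMagmaAlgebra1 K)) ^ (n + 1 + 1)) f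
          = ((D : Module.End K (FreeMagmaAlgebra1 K)) ^ (n + 1)) (D f) := by
        rw [pow_succ]; rfl
      rw [this]
      exact ih (D f) (homog_D hD hDx hf)

lemma D_L_pow : ∀ (k : ℕ) (h : FreeMagmaAlgebra1 K),
    D (((LinearMap.mulLeft K (genx K) : Module.End K (FreeMagmaAlgebra1 K)) ^ (k + 1)) h)
      = ((k : K) + 1) • (((LinearMap.mulLeft K (genx K) : Module.End K (FreeMagmaAlgebra1 K)) ^ k) h)
        + ((LinearMap.mulLeft K (genx K) : Module.End K (FreeMagmaAlgebra1 K)) ^ (k + 1)) (D h) := by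
  intro k
  induction k with
  | zero =>
      intro h
      simp only [pow_one, pow_zero, Module.End.one_apply, LinearMap.mulLeft_apply, hD, hDx,
        one_mul, Nat.cast_zero, zero_add, one_smul]
  | succ k ih =>
      intro h
      set L : Module.End K (FreeMagmaAlgebra1 K) := LinearMap.mulLeft K (genx K)
      have hstep : ∀ g : FreeMagmaAlgebra1 K, D (L g) = g + L (D g) := by
        intro g
        simp only [L, LinearMap.mulLeft_apply, hD, hDx, one_mul]
      have e : (L ^ (k + 2)) h = L ((L ^ (k + 1)) h) := by
        rw [pow_succ']; rfl
      rw [e, hstep, ih h, map_add, map_smul]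
      have e2 : L ((L ^ k) h) = (L ^ (k + 1)) h := by rw [pow_succ']; rfl
      have e3 : L ((L ^ (k + 1)) (D h)) = (L ^ (k + 2)) (D h) := by
        conv_rhs => rw [pow_succ']
        rfl
      rw [e2, e3]
      push_cast
      module

end

/-- Auxiliary telescoping term. -/
def uAux {K : Type*} [Field K] (D : FreeMagmaAlgebra1 K →ₗ[K] FreeMagmaAlgebra1 K)
    (f : FreeMagmaAlgebra1 K) (j : ℕ) : FreeMagmaAlgebra1 K :=
  ((-1 : K) ^ j / (j.factorial : K)) •
    (((LinearMap.mulLeft K (genx K) : Module.End K (FreeMagmaAlgebra1 K)) ^ j)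
      (((D : Module.End K (FreeMagmaAlgebra1 K)) ^ j) f))

theorem integral_formula' (K : Type*) [Field K] [CharZero K]
    (D : FreeMagmaAlgebra1 K →ₗ[K] FreeMagmaAlgebra1 K)
    (hD : ∀ f g : FreeMagmaAlgebra1 K, D (f * g) = D f * g + f * D g)
    (hDx : D (genx K) = 1)
    (n : ℕ) (f : FreeMagmaAlgebra1 K) (hf : IsHomog f n) :
    D (∑ k ∈ Finset.Icc 1 (n + 1),
        ((-1 : K) ^ (k - 1) / (k.factorial : K)) •
          (((LinearMap.mulLeft K (genx K) : Module.End K (FreeMagmaAlgebra1 K)) ^ k)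
            (((D : Module.End K (FreeMagmaAlgebra1 K)) ^ (k - 1)) f))) = f := by
  classical
  rw [map_sum, ← Finset.Ico_add_one_right_eq_Icc, Finset.sum_Ico_eq_sum_range]
  have hre : ∀ i ∈ Finset.range (n + 1 + 1 - 1),
      D (((-1 : K) ^ ((1 + i) - 1) / (((1 + i).factorial : K))) •
        (((LinearMap.mulLeft K (genx K) : Module.End K (FreeMagmaAlgebra1 K)) ^ (1 + i))
          (((D : Module.End K (FreeMagmaAlgebra1 K)) ^ ((1 + i) - 1)) f)))
        = uAux D f i - uAux D f (i + 1) := by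
    intro i _
    have h1 : (1 + i) - 1 = i := by omega
    rw [h1, add_comm 1 i]
    rw [map_smul, D_L_pow hD hDx i (((D : Module.End K (FreeMagmaAlgebra1 K)) ^ i) f)]
    have h2 : D (((D : Module.End K (FreeMagmaAlgebra1 K)) ^ i) f)
        = ((D : Module.End K (FreeMagmaAlgebra1 K)) ^ (i + 1)) f := by
      rw [pow_succ']; rfl
    rw [h2, smul_add, smul_smul]
    have c1 : ((-1 : K) ^ i / (((i + 1).factorial : K))) * ((i : K) + 1)
        = (-1 : K) ^ i / ((i.factorial : K)) := by
      rw [Nat.factorial_succ]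
      have h0 : ((i.factorial : K)) ≠ 0 := Nat.cast_ne_zero.mpr i.factorial_ne_zero
      have h0' : ((i : K) + 1) ≠ 0 := by
        have := Nat.cast_add_one_ne_zero (R := K) i
        simpa using this
      push_cast
      field_simp
    rw [c1, uAux, uAux, sub_eq_add_neg]
    congr 1
    rw [← neg_smul]
    congr 1
    rw [pow_succ]
    ring
  rw [Finset.sum_congr rfl hre]
  have hrange : n + 1 + 1 - 1 = n + 1 := by omega
  rw [hrange, Finset.sum_range_sub']
  have hu0 : uAux D f 0 = f := by
    simp [uAux]
  have hun : uAux D f (n + 1) = 0 := by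
    rw [uAux, D_pow_homog hD hDx n f hf, map_zero, smul_zero]
  rw [hu0, hun, sub_zero]

/-- For `f ∈ K{x}` homogeneous of degree `n`, the element
`g = Σ_{k=1}^{n+1} ((−1)^{k−1}/k!) L^k(D^{k−1} f)` satisfies `D(g) = f`. -/
theorem integral_formula (K : Type*) [Field K] [CharZero K]
    (D : FreeMagmaAlgebra1 K →ₗ[K] FreeMagmaAlgebra1 K)
    (hD : ∀ f g : FreeMagmaAlgebra1 K, D (f * g) = D f * g + f * D g)
    (hDx : D (genx K) = 1)
    (n : ℕ) (f : FreeMagmaAlgebra1 K) (hf : IsHomog f n) :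
    D (∑ k ∈ Finset.Icc 1 (n + 1),
        ((-1 : K) ^ (k - 1) / (k.factorial : K)) •
          (((LinearMap.mulLeft K (genx K) : Module.End K (FreeMagmaAlgebra1 K)) ^ k)
            (((D : Module.End K (FreeMagmaAlgebra1 K)) ^ (k - 1)) f))) = f :=
  integral_formula' K D hD hDx n f hf
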